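/- arXiv:2209.12431 — 2 statements merged into one kernel-verified Lean document; each statement's English description precedes it below -/
import Mathlib

section
/- Let r₀ = Σ cᵢⱼ xᵢ⊗xⱼ ∈ sl₂(ℂ)⊗sl₂(ℂ) (with x₁=e, x₂=f, x₃=h) be such that r₀ + τ(r₀) is sl₂(ℂ)-invariant (i.e. annihilated by ad a ⊗ 1 + 1 ⊗ ad a for all a). Then there exist α, β, γ, ζ ∈ ℂ with r₀ = α(h⊗e − e⊗h) + β(f⊗e − e⊗f) + γ(h⊗f − f⊗h) + ζ(h⊗h + 4 e⊗f). -/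
open TensorProduct

set_option maxHeartbeats 2000000

/-- An element `t` of `L ⊗ L` is `L`-invariant if `(ad a ⊗ 1 + 1 ⊗ ad a) t = 0` for all `a`. -/
def LieTensorInvariant (L : Type*) [LieRing L] [LieAlgebra ℂ L] (t : L ⊗[ℂ] L) : Prop :=
  ∀ a : L,
    (LinearMap.rTensor L (LieAlgebra.ad ℂ L a) + LinearMap.lTensor L (LieAlgebra.ad ℂ L a)) t = 0

theorem stmt_1 (L : Type*) [LieRing L] [LieAlgebra ℂ L]
    (e f h : L) (t : IsSl2Triple h e f)
    (b : Module.Basis (Fin 3) ℂ L) (hb : ⇑b = ![e, f, h])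
    (r₀ : L ⊗[ℂ] L)
    (hinv : LieTensorInvariant L (r₀ + TensorProduct.comm ℂ L L r₀)) :
    ∃ α β γ ζ : ℂ,
      r₀ = α • (h ⊗ₜ[ℂ] e - e ⊗ₜ[ℂ] h) + β • (f ⊗ₜ[ℂ] e - e ⊗ₜ[ℂ] f)
        + γ • (h ⊗ₜ[ℂ] f - f ⊗ₜ[ℂ] h) + ζ • (h ⊗ₜ[ℂ] h + (4 : ℂ) • (e ⊗ₜ[ℂ] f)) := by
  classical
  have he : b 0 = e := by rw [hb]; rfl
  have hf : b 1 = f := by rw [hb]; rfl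
  have hh : b 2 = h := by rw [hb]; rfl
  have hr := (Module.Basis.tensorProduct b b).sum_repr r₀
  rw [Fintype.sum_prod_type] at hr
  simp only [Fin.sum_univ_three, Module.Basis.tensorProduct_apply] at hr
  have hef : ⁅b 0, b 1⁆ = b 2 := by rw [he, hf, hh]; exact t.lie_e_f
  have hfe : ⁅b 1, b 0⁆ = -(b 2) := by rw [← lie_skew, hef]
  have hhe : ⁅b 2, b 0⁆ = (2:ℂ) • b 0 := by
    rw [he, hh, t.lie_h_e_nsmul, two_smul, two_smul]
  have hhf : ⁅b 2, b 1⁆ = -((2:ℂ) • b 1) := by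
    rw [hf, hh, t.lie_h_f_nsmul, two_smul, two_smul]
  have heh : ⁅b 0, b 2⁆ = -((2:ℂ) • b 0) := by rw [← lie_skew, hhe]
  have hfh : ⁅b 1, b 2⁆ = (2:ℂ) • b 1 := by rw [← lie_skew, hhf, neg_neg]
  have H0 := hinv (b 0)
  have H1 := hinv (b 1)
  rw [← hr] at H0 H1
  simp only [map_add, map_smul, LinearMap.add_apply, comm_tmul,
    LinearMap.rTensor_tmul, LinearMap.lTensor_tmul, LieAlgebra.ad_apply,
    hef, hfe, hhe, hhf, heh, hfh, lie_self, smul_tmul', tmul_smul,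
    zero_tmul, tmul_zero, smul_zero, add_zero, zero_add, smul_neg,
    tmul_neg, neg_tmul, smul_smul] at H0 H1
  have coord : ∀ (k : Fin 3 × Fin 3) (x : L ⊗[ℂ] L), x = 0 →
      ((Module.Basis.tensorProduct b b).repr x) k = 0 := by
    intro k x hx; rw [hx]; simp
  have E1 := coord (0,0) _ H0
  have E2 := coord (1,2) _ H0
  have E3 := coord (2,2) _ H0
  have E4 := coord (0,2) _ H0
  have E5 := coord (2,0) _ H1
  simp only [map_add, map_neg, map_smul, Finsupp.add_apply, Finsupp.neg_apply,
    Finsupp.smul_apply, Module.Basis.tensorProduct_repr_tmul_apply, Module.Basis.repr_self,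
    Finsupp.single_apply, smul_eq_mul] at E1 E2 E3 E4 E5
  norm_num [Fin.ext_iff] at E1 E2 E3 E4 E5
  refine ⟨(Module.Basis.tensorProduct b b).repr r₀ (2,0), (Module.Basis.tensorProduct b b).repr r₀ (1,0),
    (Module.Basis.tensorProduct b b).repr r₀ (2,1), (Module.Basis.tensorProduct b b).repr r₀ (2,2), ?_⟩
  rw [← he, ← hf, ← hh, ← hr]
  apply (Module.Basis.tensorProduct b b).repr.injective
  ext k
  rcases k with ⟨i, j⟩
  simp only [map_add, map_sub, map_neg, map_smul, Finsupp.add_apply, Finsupp.sub_apply,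
    Finsupp.neg_apply, Finsupp.smul_apply, Module.Basis.tensorProduct_repr_tmul_apply,
    Module.Basis.repr_self, Finsupp.single_apply, smul_eq_mul]
  fin_cases i <;> fin_cases j <;> norm_num [Fin.ext_iff, Prod.ext_iff] <;>
    first
    | linear_combination E5
    | linear_combination E2
    | linear_combination E3
    | linear_combination E4
    | linear_combination (-1/4 : ℂ) * E1
end

section
/- Every automorphism of sl₂(ℂ) has matrix, in the basis (e, f, h), of the form [[a², −b², −2ab], [−c², d², 2cd], [−ac, bd, ad+bc]] for some a, b, c, d ∈ ℂ with ad − bc = 1. -/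
set_option maxHeartbeats 2000000


/-- Every automorphism of `sl₂(ℂ)` has, in the basis `(e, f, h)`, the matrix
`[[a², −b², −2ab], [−c², d², 2cd], [−ac, bd, ad+bc]]` for some `a, b, c, d` with
`ad − bc = 1` (the columns are the coordinates of the images of `e, f, h`),
and conversely every such matrix defines an automorphism. -/
theorem stmt_12 (L : Type*) [LieRing L] [LieAlgebra ℂ L]
    (e f h : L) (t : IsSl2Triple h e f)
    (bas : Module.Basis (Fin 3) ℂ L) (hbas : ⇑bas = ![e, f, h]) :
    (∀ φ : L ≃ₗ⁅ℂ⁆ L, ∃ a b c d : ℂ, a * d - b * c = 1 ∧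
      φ e = a ^ 2 • e - c ^ 2 • f - (a * c) • h ∧
      φ f = (-b ^ 2) • e + d ^ 2 • f + (b * d) • h ∧
      φ h = (-(2 * a * b)) • e + (2 * c * d) • f + (a * d + b * c) • h) ∧
    (∀ a b c d : ℂ, a * d - b * c = 1 → ∃ φ : L ≃ₗ⁅ℂ⁆ L,
      φ e = a ^ 2 • e - c ^ 2 • f - (a * c) • h ∧
      φ f = (-b ^ 2) • e + d ^ 2 • f + (b * d) • h ∧
      φ h = (-(2 * a * b)) • e + (2 * c * d) • f + (a * d + b * c) • h) := by
  obtain ⟨hne, hef, hhe, hhf⟩ := t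
  have he0 : bas 0 = e := by rw [hbas]; rfl
  have hf0 : bas 1 = f := by rw [hbas]; rfl
  have hh0 : bas 2 = h := by rw [hbas]; rfl
  have hhe' : ⁅h, e⁆ = (2:ℂ) • e := by
    rw [hhe, ← Nat.cast_smul_eq_nsmul ℂ]; norm_num
  have hhf' : ⁅h, f⁆ = (-2:ℂ) • f := by
    rw [hhf, ← Nat.cast_smul_eq_nsmul ℂ]
    norm_num
  have hfe : ⁅f, e⁆ = -h := by rw [← lie_skew, hef]
  have heh : ⁅e, h⁆ = -((2:ℂ) • e) := by rw [← lie_skew, hhe']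
  have hfh : ⁅f, h⁆ = -((-2:ℂ) • f) := by rw [← lie_skew, hhf']
  have brk : ∀ p q r p' q' r' : ℂ,
      ⁅p • e + q • f + r • h, p' • e + q' • f + r' • h⁆ =
        (2*(r*p' - p*r')) • e + (2*(q*r' - r*q')) • f + (p*q' - q*p') • h := by
    intro p q r p' q' r'
    simp only [add_lie, lie_add, smul_lie, lie_smul, lie_self, smul_zero, hef, hhe', hhf',
      hfe, heh, hfh, smul_neg, smul_smul]
    module
  have coords' : ∀ p q r p' q' r' : ℂ, p • e + q • f + r • h = p' • e + q' • f + r' • h →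
      p = p' ∧ q = q' ∧ r = r' := by
    intro p q r p' q' r' hyp
    have h0 : (p - p') • e + (q - q') • f + (r - r') • h = 0 := by
      have hs := sub_eq_zero_of_eq hyp
      rw [← hs]; module
    have li := Fintype.linearIndependent_iff.mp bas.linearIndependent
    have key := li ![p - p', q - q', r - r'] (by
      rw [Fin.sum_univ_three]
      simpa [he0, hf0, hh0] using h0)
    exact ⟨sub_eq_zero.mp (key 0), sub_eq_zero.mp (key 1), sub_eq_zero.mp (key 2)⟩
  constructor
  · -- forward direction
    intro φ
    have expand : ∀ v : L, v = bas.repr v 0 • e + bas.repr v 1 • f + bas.repr v 2 • h := by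
      intro v
      have hs := bas.sum_repr v
      rw [Fin.sum_univ_three, he0, hf0, hh0] at hs
      exact hs.symm
    obtain ⟨x1, x2, x3, hx⟩ : ∃ p q r : ℂ, φ e = p • e + q • f + r • h :=
      ⟨_, _, _, expand (φ e)⟩
    obtain ⟨y1, y2, y3, hy⟩ : ∃ p q r : ℂ, φ f = p • e + q • f + r • h :=
      ⟨_, _, _, expand (φ f)⟩
    obtain ⟨z1, z2, z3, hz⟩ : ∃ p q r : ℂ, φ h = p • e + q • f + r • h :=
      ⟨_, _, _, expand (φ h)⟩
    -- the three bracket relations transported by φ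
    have eq1 : ⁅φ h, φ e⁆ = (2:ℂ) • φ e := by
      rw [← φ.map_lie, hhe']; exact φ.toLinearEquiv.map_smul 2 e
    have eq2 : ⁅φ h, φ f⁆ = (-2:ℂ) • φ f := by
      rw [← φ.map_lie, hhf']; exact φ.toLinearEquiv.map_smul (-2) f
    have eq3 : ⁅φ e, φ f⁆ = φ h := by rw [← φ.map_lie, hef]
    have EA := brk z1 z2 z3 x1 x2 x3
    rw [← hz, ← hx, eq1, hx, smul_add, smul_add, smul_smul, smul_smul, smul_smul] at EA
    obtain ⟨A1, A2, A3⟩ := coords' _ _ _ _ _ _ EA.symm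
    have EB := brk z1 z2 z3 y1 y2 y3
    rw [← hz, ← hy, eq2, hy, smul_add, smul_add, smul_smul, smul_smul, smul_smul] at EB
    obtain ⟨B1, B2, B3⟩ := coords' _ _ _ _ _ _ EB.symm
    have EC := brk x1 x2 x3 y1 y2 y3
    rw [← hx, ← hy, eq3, hz] at EC
    obtain ⟨C1, C2, C3⟩ := coords' _ _ _ _ _ _ EC
    -- φ e ≠ 0
    have hxne : ¬ (x1 = 0 ∧ x2 = 0 ∧ x3 = 0) := by
      rintro ⟨u1, u2, u3⟩
      have : φ e = 0 := by rw [hx, u1, u2, u3]; simp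
      have he' : e = 0 := φ.toLinearEquiv.map_eq_zero_iff.mp this
      exact bas.ne_zero 0 (he0.trans he')
    -- derived quadratic relations
    have P1 : x3 ^ 2 + x1 * x2 = 0 := by
      linear_combination (-x2 / 4) * A1 + (-x1 / 4) * A2 + (-x3 / 2) * A3
    have P2 : y3 ^ 2 + y1 * y2 = 0 := by
      linear_combination (y2 / 4) * B1 + (y1 / 4) * B2 + (y3 / 2) * B3
    by_cases hx1 : x1 = 0
    · -- degenerate first column: x1 = 0
      have hx3 : x3 = 0 := by
        have hq : x3 ^ 2 = 0 := by linear_combination P1 - x2 * hx1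
        exact pow_eq_zero_iff (by norm_num : (2:ℕ) ≠ 0) |>.mp hq
      have hx2 : x2 ≠ 0 := fun h2 => hxne ⟨hx1, h2, hx3⟩
      obtain ⟨c, hc⟩ := IsAlgClosed.exists_pow_nat_eq (k := ℂ) (-x2) (n := 2) (by norm_num)
      have hcne : c ≠ 0 := by
        intro h0
        apply hx2
        have h2 : -x2 = 0 := by rw [← hc, h0]; ring
        simpa using h2
      have hz3 : z3 = -1 := by
        have hq : (z3 + 1) * x2 = 0 := by linear_combination (-1/2) * A2 + z2 * hx3
        rcases mul_eq_zero.mp hq with hq' | hq'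
        · linear_combination hq'
        · exact absurd hq' hx2
      have hz1 : z1 = 0 := by
        have hq : z1 * x2 = 0 := by linear_combination A3 + z2 * hx1 + 2 * hx3
        rcases mul_eq_zero.mp hq with hq' | hq'
        · exact hq'
        · exact absurd hq' hx2
      have hy1 : x2 * y1 = 1 := by linear_combination C3 - hz3 + y2 * hx1
      have hz2 : z2 = 2 * x2 * y3 := by linear_combination C2 - 2 * y2 * hx3
      have hy2' : y2 = -x2 * y3 ^ 2 := by
        linear_combination (1/4) * B2 + (y2/2) * hz3 - (y3/2) * hz2
      refine ⟨0, (z3 - 1) / (2 * c), c, z2 / (2 * c), ?_, ?_, ?_, ?_⟩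
      · field_simp
        linear_combination (-c) * hz3
      · rw [hx]
        match_scalars
        · linear_combination hx1
        · linear_combination hc
        · linear_combination hx3
      · rw [hy]
        match_scalars
        · field_simp
          linear_combination 4*y1*hc - 4*hy1 + (z3-3)*hz3
        · field_simp
          linear_combination 4*y2*hc - (z2 + 2*x2*y3)*hz2 - 4*x2*hy2'
        · field_simp
          linear_combination 4*y3*hc - z2*hz3 + 2*hz2
      · rw [hz]
        match_scalars
        · field_simp
          linear_combination c * hz1
        · field_simp
        · field_simp
          linear_combination c * hz3
    · -- main case: x1 ≠ 0
      obtain ⟨a, ha⟩ := IsAlgClosed.exists_pow_nat_eq (k := ℂ) x1 (n := 2) (by norm_num)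
      have hane : a ≠ 0 := by
        intro h0
        apply hx1
        rw [← ha, h0]; ring
      have hS : x1 * y2 + x2 * y1 + 2 * x3 * y3 = 1 := by
        have hS0 : x1 * (x1 * y2 + x2 * y1 + 2 * x3 * y3 - 1) = 0 := by
          linear_combination (1/2) * A1 - x1 * C3 + x3 * C1 + 2 * y1 * P1
        rcases mul_eq_zero.mp hS0 with hq | hq
        · exact absurd hq hx1
        · linear_combination hq
      have T2 : 4 * x1 * y1 + z1 ^ 2 = 0 := by
        linear_combination (z1 + 2 * (x3 * y1 - x1 * y3) + 4 * x1 * y3) * C1 + 4 * y1 ^ 2 * P1 +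
          2 * x1 * B1 - 4 * x1 * y1 * C3 - 4 * x1 ^ 2 * P2
      have T3 : 4 * x1 * y2 = (1 + z3) ^ 2 := by
        linear_combination (-(1 + z3 + 2 * (x1 * y2 + x3 * y3))) * C3 +
          (1 + z3 + 2 * (x1 * y2 + x3 * y3) - 4 * x1 * y2) * hS - 4 * y3 ^ 2 * P1 + 4 * x1 * x2 * P2
      have T4 : 4 * x1 * y3 = -(z1 * (1 + z3)) := by
        linear_combination (1 + z3) * C1 + (2 * (x3 * y1 - x1 * y3)) * C3 +
          (-2 * (x3 * y1 - x1 * y3) - 4 * x1 * y3) * hS + 4 * y1 * y3 * P1 + 4 * x1 * x3 * P2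
      have U : x1 * z2 + x3 * (1 + z3) = 0 := by
        linear_combination x1 * C2 + x3 * C3 - x3 * hS + 2 * y3 * P1
      refine ⟨a, -z1 / (2 * a), -x3 / a, (1 + z3) / (2 * a), ?_, ?_, ?_, ?_⟩
      · field_simp
        linear_combination (z3-1)*ha + (1/2)*A1
      · rw [hx]
        match_scalars
        · linear_combination -ha
        · field_simp
          linear_combination x2*ha + P1
        · field_simp
      · rw [hy]
        match_scalars
        · field_simp
          linear_combination 4*y1*ha + T2
        · field_simp
          linear_combination 4*y2*ha + T3
        · field_simp
          linear_combination 4*y3*ha + T4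
      · rw [hz]
        match_scalars
        · field_simp
        · field_simp
          linear_combination z2*ha + U
        · field_simp
          linear_combination (z3-1)*ha + (1/2)*A1

  · -- converse direction
    intro a b c d hadbc
    set v0 : L := a ^ 2 • e - c ^ 2 • f - (a * c) • h with hv0
    set v1 : L := (-b ^ 2) • e + d ^ 2 • f + (b * d) • h with hv1
    set v2 : L := (-(2 * a * b)) • e + (2 * c * d) • f + (a * d + b * c) • h with hv2
    set w0 : L := d ^ 2 • e - c ^ 2 • f + (c * d) • h with hw0
    set w1 : L := (-b ^ 2) • e + a ^ 2 • f - (a * b) • h with hw1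
    set w2 : L := (2 * b * d) • e - (2 * a * c) • f + (a * d + b * c) • h with hw2
    let ψ : L →ₗ[ℂ] L := bas.constr ℂ ![v0, v1, v2]
    let ψ' : L →ₗ[ℂ] L := bas.constr ℂ ![w0, w1, w2]
    have hψe : ψ e = v0 := by rw [← he0]; exact bas.constr_basis ℂ _ 0
    have hψf : ψ f = v1 := by rw [← hf0]; exact bas.constr_basis ℂ _ 1
    have hψh : ψ h = v2 := by rw [← hh0]; exact bas.constr_basis ℂ _ 2
    have hψ'e : ψ' e = w0 := by rw [← he0]; exact bas.constr_basis ℂ _ 0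
    have hψ'f : ψ' f = w1 := by rw [← hf0]; exact bas.constr_basis ℂ _ 1
    have hψ'h : ψ' h = w2 := by rw [← hh0]; exact bas.constr_basis ℂ _ 2
    have v0' : v0 = (a ^ 2) • e + (-c ^ 2) • f + (-(a * c)) • h := by rw [hv0]; module
    have w0' : w0 = (d ^ 2) • e + (-c ^ 2) • f + (c * d) • h := by rw [hw0]; module
    have w1' : w1 = (-b ^ 2) • e + (a ^ 2) • f + (-(a * b)) • h := by rw [hw1]; module
    have w2' : w2 = (2 * b * d) • e + (-(2 * a * c)) • f + (a * d + b * c) • h := by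
      rw [hw2]; module
    have hinv1 : ∀ u : L, ψ (ψ' u) = u := by
      have hc : ψ ∘ₗ ψ' = LinearMap.id := by
        refine bas.ext fun i => ?_
        fin_cases i
        · show ψ (ψ' (bas 0)) = bas 0
          rw [he0, hψ'e, hw0, map_add, map_sub, map_smul, map_smul, map_smul,
            hψe, hψf, hψh, hv0, hv1, hv2]
          match_scalars
          · linear_combination (a*d-b*c+1) * hadbc
          · ring
          · ring
        · show ψ (ψ' (bas 1)) = bas 1
          rw [hf0, hψ'f, hw1, map_sub, map_add, map_smul, map_smul, map_smul,
            hψe, hψf, hψh, hv0, hv1, hv2]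
          match_scalars
          · ring
          · linear_combination (a*d-b*c+1) * hadbc
          · ring
        · show ψ (ψ' (bas 2)) = bas 2
          rw [hh0, hψ'h, hw2, map_add, map_sub, map_smul, map_smul, map_smul,
            hψe, hψf, hψh, hv0, hv1, hv2]
          match_scalars
          · ring
          · ring
          · linear_combination (a*d-b*c+1) * hadbc
      intro u
      exact LinearMap.congr_fun hc u
    have hinv2 : ∀ u : L, ψ' (ψ u) = u := by
      have hc : ψ' ∘ₗ ψ = LinearMap.id := by
        refine bas.ext fun i => ?_
        fin_cases i
        · show ψ' (ψ (bas 0)) = bas 0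
          rw [he0, hψe, hv0, map_sub, map_sub, map_smul, map_smul, map_smul,
            hψ'e, hψ'f, hψ'h, hw0, hw1, hw2]
          match_scalars
          · linear_combination (a*d-b*c+1) * hadbc
          · ring
          · ring
        · show ψ' (ψ (bas 1)) = bas 1
          rw [hf0, hψf, hv1, map_add, map_add, map_smul, map_smul, map_smul,
            hψ'e, hψ'f, hψ'h, hw0, hw1, hw2]
          match_scalars
          · ring
          · linear_combination (a*d-b*c+1) * hadbc
          · ring
        · show ψ' (ψ (bas 2)) = bas 2
          rw [hh0, hψh, hv2, map_add, map_add, map_smul, map_smul, map_smul,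
            hψ'e, hψ'f, hψ'h, hw0, hw1, hw2]
          match_scalars
          · ring
          · ring
          · linear_combination (a*d-b*c+1) * hadbc
      intro u
      exact LinearMap.congr_fun hc u
    have mapLie : ∀ u v : L, ψ ⁅u, v⁆ = ⁅ψ u, ψ v⁆ := by
      have base : ∀ i j : Fin 3, ψ ⁅bas i, bas j⁆ = ⁅ψ (bas i), ψ (bas j)⁆ := by
        have hbef : ψ ⁅e, f⁆ = ⁅ψ e, ψ f⁆ := by
          rw [hef, hψh, hψe, hψf, v0', hv1, brk, hv2]
          match_scalars
          · linear_combination (2*a*b) * hadbc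
          · linear_combination (-2*c*d) * hadbc
          · linear_combination (-(a*d+b*c)) * hadbc
        have hbhe : ψ ⁅h, e⁆ = ⁅ψ h, ψ e⁆ := by
          rw [hhe', map_smul, hψe, hψh, hv2, v0', brk]
          match_scalars
          · linear_combination (-2*a^2) * hadbc
          · linear_combination (2*c^2) * hadbc
          · linear_combination (2*a*c) * hadbc
        have hbhf : ψ ⁅h, f⁆ = ⁅ψ h, ψ f⁆ := by
          rw [hhf', map_smul, hψf, hψh, hv2, hv1, brk]
          match_scalars
          · linear_combination (-2*b^2) * hadbc
          · linear_combination (2*d^2) * hadbc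
          · linear_combination (2*b*d) * hadbc
        intro i j
        fin_cases i <;> fin_cases j
        · show ψ ⁅bas 0, bas 0⁆ = ⁅ψ (bas 0), ψ (bas 0)⁆
          simp [lie_self]
        · show ψ ⁅bas 0, bas 1⁆ = ⁅ψ (bas 0), ψ (bas 1)⁆
          rw [he0, hf0]; exact hbef
        · show ψ ⁅bas 0, bas 2⁆ = ⁅ψ (bas 0), ψ (bas 2)⁆
          rw [he0, hh0, ← lie_skew e h, ← lie_skew (ψ e) (ψ h), map_neg, hbhe]
        · show ψ ⁅bas 1, bas 0⁆ = ⁅ψ (bas 1), ψ (bas 0)⁆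
          rw [hf0, he0, ← lie_skew f e, ← lie_skew (ψ f) (ψ e), map_neg, hbef]
        · show ψ ⁅bas 1, bas 1⁆ = ⁅ψ (bas 1), ψ (bas 1)⁆
          simp [lie_self]
        · show ψ ⁅bas 1, bas 2⁆ = ⁅ψ (bas 1), ψ (bas 2)⁆
          rw [hf0, hh0, ← lie_skew f h, ← lie_skew (ψ f) (ψ h), map_neg, hbhf]
        · show ψ ⁅bas 2, bas 0⁆ = ⁅ψ (bas 2), ψ (bas 0)⁆
          rw [hh0, he0]; exact hbhe
        · show ψ ⁅bas 2, bas 1⁆ = ⁅ψ (bas 2), ψ (bas 1)⁆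
          rw [hh0, hf0]; exact hbhf
        · show ψ ⁅bas 2, bas 2⁆ = ⁅ψ (bas 2), ψ (bas 2)⁆
          simp [lie_self]
      let B1 : L →ₗ[ℂ] L →ₗ[ℂ] L := LinearMap.mk₂ ℂ (fun u v => ψ ⁅u, v⁆)
        (fun u u' v => by simp only [add_lie, map_add]) (fun s u v => by simp only [smul_lie, map_smul])
        (fun u v v' => by simp only [lie_add, map_add]) (fun s u v => by simp only [lie_smul, map_smul])
      let B2 : L →ₗ[ℂ] L →ₗ[ℂ] L := LinearMap.mk₂ ℂ (fun u v => ⁅ψ u, ψ v⁆)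
        (fun u u' v => by simp only [map_add, add_lie]) (fun s u v => by simp only [map_smul, smul_lie])
        (fun u v v' => by simp only [map_add, lie_add]) (fun s u v => by simp only [map_smul, lie_smul])
      have hB : B1 = B2 := bas.ext fun i => bas.ext fun j => base i j
      intro u v
      exact LinearMap.congr_fun (LinearMap.congr_fun hB u) v
    refine ⟨⟨⟨ψ, fun {u v} => mapLie u v⟩, ψ', hinv2, hinv1⟩, ?_, ?_, ?_⟩
    · exact hψe
    · exact hψf
    · exact hψh
end
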